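/- For all positive integers k, n and integer s ≥ 0, ∑ gcd(a₁+⋯+a_k−1, b₁, …, b_s, n) = φ_k(n)·σ_s(n), where the sum runs over all tuples with 1 ≤ aᵢ, bⱼ ≤ n satisfying gcd(a₁⋯a_k, n) = 1 and gcd(a₁+⋯+a_k, n) = 1. -/

import Mathlib

open Finset
open scoped Classical

/-- The `k`-dimensional generalized Euler function `φ_k(n)`. -/
def tothPhi (k n : ℕ) : ℕ :=
  ((Fintype.piFinset fun _ : Fin k => Finset.Icc 1 n).filter
    (fun a => Nat.gcd (∏ i, a i) n = 1 ∧ Nat.gcd (∑ i, a i) n = 1)).card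

private lemma gcd_eq_sum_totient (X n : ℕ) (hn : 0 < n) :
    Nat.gcd X n = ∑ d ∈ n.divisors.filter (· ∣ X), Nat.totient d := by
  conv_lhs => rw [← Nat.sum_totient (Nat.gcd X n)]
  refine Finset.sum_congr ?_ fun _ _ => rfl
  ext d
  simp only [Nat.mem_divisors, Finset.mem_filter, Nat.dvd_gcd_iff]
  have h0 : Nat.gcd X n ≠ 0 := (Nat.gcd_pos_of_pos_right X hn).ne'
  constructor
  · rintro ⟨⟨h1, h2⟩, -⟩; exact ⟨⟨h2, hn.ne'⟩, h1⟩
  · rintro ⟨⟨h1, -⟩, h2⟩; exact ⟨⟨h2, h1⟩, h0⟩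

private lemma icc_cast_inj {n : ℕ} (hn : 0 < n) {x y : ℕ} (hx : x ∈ Finset.Icc 1 n)
    (hy : y ∈ Finset.Icc 1 n) (h : (x : ZMod n) = y) : x = y := by
  simp only [Finset.mem_Icc] at hx hy
  rw [ZMod.natCast_eq_natCast_iff, Nat.ModEq] at h
  rcases eq_or_lt_of_le hx.2 with h1 | h1 <;> rcases eq_or_lt_of_le hy.2 with h2 | h2
  · omega
  · rw [h1, Nat.mod_self, Nat.mod_eq_of_lt h2] at h; omega
  · rw [h2, Nat.mod_self, Nat.mod_eq_of_lt h1] at h; omega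
  · rwa [Nat.mod_eq_of_lt h1, Nat.mod_eq_of_lt h2] at h

/-- Transfer counting from tuples in `[1,n]` to tuples in `ZMod n`. -/
private lemma card_corr (k n : ℕ) [NeZero n] (hn : 0 < n) (q : ZMod n → Prop) [DecidablePred q] :
    (((Fintype.piFinset fun _ : Fin k => Finset.Icc 1 n)).filter
      (fun a => (Nat.gcd (∏ i, a i) n = 1 ∧ Nat.gcd (∑ i, a i) n = 1) ∧
        q ((∑ i, a i : ℕ)))).card
    = (Finset.univ.filter (fun v : Fin k → ZMod n =>
        (IsUnit (∏ i, v i) ∧ IsUnit (∑ i, v i)) ∧ q (∑ i, v i))).card := by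
  apply Finset.card_bij (fun a _ => fun i => ((a i : ℕ) : ZMod n))
  · intro a ha
    simp only [Finset.mem_filter, Fintype.mem_piFinset] at ha ⊢
    obtain ⟨hmem, ⟨hp, hs⟩, hq⟩ := ha
    refine ⟨Finset.mem_univ _, ⟨?_, ?_⟩, ?_⟩
    · rw [← Nat.cast_prod]; exact (ZMod.isUnit_iff_coprime _ _).mpr hp
    · rw [← Nat.cast_sum]; exact (ZMod.isUnit_iff_coprime _ _).mpr hs
    · rw [← Nat.cast_sum]; exact hq
  · intro a ha a' ha' hee
    simp only [Finset.mem_filter, Fintype.mem_piFinset] at ha ha'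
    funext i
    exact icc_cast_inj hn (ha.1 i) (ha'.1 i) (congrFun hee i)
  · intro v hv
    simp only [Finset.mem_filter, Finset.mem_univ, true_and] at hv
    set a : Fin k → ℕ := fun i => if (v i).val = 0 then n else (v i).val with ha
    have hcast : ∀ i, ((a i : ℕ) : ZMod n) = v i := by
      intro i
      by_cases h : (v i).val = 0
      · simp only [ha, h, if_true]
        rw [ZMod.natCast_self]
        exact ((ZMod.val_eq_zero _).mp h).symm
      · simp only [ha, h, if_false]
        exact ZMod.natCast_rightInverse (v i)
    have hmem : ∀ i, a i ∈ Finset.Icc 1 n := by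
      intro i
      by_cases h : (v i).val = 0
      · simp only [ha, h, if_true, Finset.mem_Icc]
        exact ⟨hn, le_refl n⟩
      · simp only [ha, h, if_false, Finset.mem_Icc]
        exact ⟨Nat.one_le_iff_ne_zero.mpr h, (ZMod.val_lt (v i)).le⟩
    have hpc : ((∏ i, a i : ℕ) : ZMod n) = ∏ i, v i := by
      rw [Nat.cast_prod]; exact Finset.prod_congr rfl fun i _ => hcast i
    have hsc : ((∑ i, a i : ℕ) : ZMod n) = ∑ i, v i := by
      rw [Nat.cast_sum]; exact Finset.sum_congr rfl fun i _ => hcast i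
    refine ⟨a, ?_, funext hcast⟩
    simp only [Finset.mem_filter, Fintype.mem_piFinset]
    refine ⟨hmem, ⟨?_, ?_⟩, ?_⟩
    · exact (ZMod.isUnit_iff_coprime _ _).mp (hpc ▸ hv.1.1)
    · exact (ZMod.isUnit_iff_coprime _ _).mp (hsc ▸ hv.1.2)
    · rw [hsc]; exact hv.2

/-- The fibers of the sum map over units all have the same cardinality. -/
private lemma fiber_card_eq (k n : ℕ) [NeZero n] (u : (ZMod n)ˣ) (c : ZMod n) :
    (Finset.univ.filter (fun v : Fin k → ZMod n =>
        (IsUnit (∏ i, v i) ∧ IsUnit (∑ i, v i)) ∧ ∑ i, v i = (u : ZMod n) * c)).card =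
    (Finset.univ.filter (fun v : Fin k → ZMod n =>
        (IsUnit (∏ i, v i) ∧ IsUnit (∑ i, v i)) ∧ ∑ i, v i = c)).card := by
  apply Finset.card_bij' (fun v _ => fun i => ((u⁻¹ : (ZMod n)ˣ) : ZMod n) * v i)
    (fun v _ => fun i => (u : ZMod n) * v i)
  · intro v hv
    simp only [Finset.mem_filter, Finset.mem_univ, true_and] at hv ⊢
    obtain ⟨⟨hp, hs⟩, hc⟩ := hv
    have hprod : (∏ i, ((u⁻¹ : (ZMod n)ˣ) : ZMod n) * v i)
        = ((u⁻¹ : (ZMod n)ˣ) : ZMod n) ^ k * ∏ i, v i := by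
      rw [Finset.prod_mul_distrib, Finset.prod_const, Finset.card_univ, Fintype.card_fin]
    have hsum : (∑ i, ((u⁻¹ : (ZMod n)ˣ) : ZMod n) * v i)
        = ((u⁻¹ : (ZMod n)ˣ) : ZMod n) * ∑ i, v i := (Finset.mul_sum _ _ _).symm
    refine ⟨⟨?_, ?_⟩, ?_⟩
    · rw [hprod]; exact ((u⁻¹.isUnit).pow k).mul hp
    · rw [hsum]; exact (u⁻¹.isUnit).mul hs
    · rw [hsum, hc, ← mul_assoc, ← Units.val_mul, inv_mul_cancel, Units.val_one, one_mul]
  · intro v hv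
    simp only [Finset.mem_filter, Finset.mem_univ, true_and] at hv ⊢
    obtain ⟨⟨hp, hs⟩, hc⟩ := hv
    have hprod : (∏ i, (u : ZMod n) * v i) = (u : ZMod n) ^ k * ∏ i, v i := by
      rw [Finset.prod_mul_distrib, Finset.prod_const, Finset.card_univ, Fintype.card_fin]
    have hsum : (∑ i, (u : ZMod n) * v i) = (u : ZMod n) * ∑ i, v i := (Finset.mul_sum _ _ _).symm
    refine ⟨⟨?_, ?_⟩, ?_⟩
    · rw [hprod]; exact ((u.isUnit).pow k).mul hp
    · rw [hsum]; exact (u.isUnit).mul hs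
    · rw [hsum, hc]
  · intro v _; funext i
    simp [← mul_assoc, ← Units.val_mul]
  · intro v _; funext i
    simp [← mul_assoc, ← Units.val_mul]

private lemma fiber_card_unit (k n : ℕ) [NeZero n] {c : ZMod n} (hc : IsUnit c) :
    (Finset.univ.filter (fun v : Fin k → ZMod n =>
        (IsUnit (∏ i, v i) ∧ IsUnit (∑ i, v i)) ∧ ∑ i, v i = c)).card =
    (Finset.univ.filter (fun v : Fin k → ZMod n =>
        (IsUnit (∏ i, v i) ∧ IsUnit (∑ i, v i)) ∧ ∑ i, v i = 1)).card := by
  obtain ⟨u, rfl⟩ := hc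
  have := fiber_card_eq k n u 1
  rwa [mul_one] at this

/-- The key counting identity on the `ZMod n` side. -/
private lemma zmod_count (k n : ℕ) [NeZero n] (hn : 0 < n) {d : ℕ} (hd : d ∣ n) (hd0 : d ≠ 0) :
    Nat.totient d * (Finset.univ.filter (fun v : Fin k → ZMod n =>
        (IsUnit (∏ i, v i) ∧ IsUnit (∑ i, v i)) ∧
          ZMod.castHom hd (ZMod d) (∑ i, v i) = 1)).card
    = (Finset.univ.filter (fun v : Fin k → ZMod n =>
        IsUnit (∏ i, v i) ∧ IsUnit (∑ i, v i))).card := by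
  haveI : NeZero d := ⟨hd0⟩
  set N : ZMod n → ℕ := fun c => (Finset.univ.filter (fun v : Fin k → ZMod n =>
      (IsUnit (∏ i, v i) ∧ IsUnit (∑ i, v i)) ∧ ∑ i, v i = c)).card with hN
  -- RHS fiberwise
  have hR : (Finset.univ.filter (fun v : Fin k → ZMod n =>
      IsUnit (∏ i, v i) ∧ IsUnit (∑ i, v i))).card
      = ∑ c ∈ Finset.univ.filter (fun c : ZMod n => IsUnit c), N c := by
    rw [Finset.card_eq_sum_card_fiberwise
      (f := fun v : Fin k → ZMod n => ∑ i, v i)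
      (t := Finset.univ.filter (fun c : ZMod n => IsUnit c))
      (fun v hv => by
        simp only [Finset.coe_filter, Finset.mem_coe, Set.mem_setOf_eq, Finset.mem_filter, Finset.mem_univ, true_and] at hv ⊢
        exact hv.2)]
    refine Finset.sum_congr rfl fun c _ => ?_
    rw [hN, Finset.filter_filter]
  -- LHS fiberwise
  have hL : (Finset.univ.filter (fun v : Fin k → ZMod n =>
      (IsUnit (∏ i, v i) ∧ IsUnit (∑ i, v i)) ∧
        ZMod.castHom hd (ZMod d) (∑ i, v i) = 1)).card
      = ∑ c ∈ Finset.univ.filter (fun c : ZMod n =>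
          IsUnit c ∧ ZMod.castHom hd (ZMod d) c = 1), N c := by
    rw [Finset.card_eq_sum_card_fiberwise
      (f := fun v : Fin k → ZMod n => ∑ i, v i)
      (t := Finset.univ.filter (fun c : ZMod n =>
        IsUnit c ∧ ZMod.castHom hd (ZMod d) c = 1))
      (fun v hv => by
        simp only [Finset.coe_filter, Finset.mem_coe, Set.mem_setOf_eq, Finset.mem_filter, Finset.mem_univ, true_and] at hv ⊢
        exact ⟨hv.1.2, hv.2⟩)]
    refine Finset.sum_congr rfl fun c hc => ?_
    simp only [Finset.mem_filter, Finset.mem_univ, true_and] at hc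
    rw [hN, Finset.filter_filter]
    congr 1
    apply Finset.filter_congr
    intro v _
    constructor
    · rintro ⟨⟨h1, -⟩, h2⟩; exact ⟨h1, h2⟩
    · rintro ⟨h1, h2⟩; exact ⟨⟨h1, h2 ▸ hc.2⟩, h2⟩
  -- all unit fibers have size N 1
  have hfib : ∀ c : ZMod n, IsUnit c → N c = N 1 := fun c hc => fiber_card_unit k n hc
  -- cardinality of the set of units
  have hcard1 : (Finset.univ.filter (fun c : ZMod n => IsUnit c)).card
      = Nat.totient n := by
    rw [← ZMod.card_units_eq_totient n, ← Finset.card_univ]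
    refine (Finset.card_bij (fun (u : (ZMod n)ˣ) _ => (u : ZMod n)) ?_ ?_ ?_).symm
    · intro u _; simp [u.isUnit]
    · intro u _ u' _ h; exact Units.ext h
    · intro c hc
      simp only [Finset.mem_filter, Finset.mem_univ, true_and] at hc
      obtain ⟨u, rfl⟩ := hc
      exact ⟨u, Finset.mem_univ u, rfl⟩
  -- cardinality of the kernel-type set
  have hcard2 : (Finset.univ.filter (fun c : ZMod n =>
      IsUnit c ∧ ZMod.castHom hd (ZMod d) c = 1)).card
      = Nat.card (MonoidHom.ker (ZMod.unitsMap hd)) := by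
    rw [Nat.card_eq_fintype_card, Fintype.card_subtype]
    refine (Finset.card_bij (fun (u : (ZMod n)ˣ) _ => (u : ZMod n)) ?_ ?_ ?_).symm
    · intro u hu
      simp only [Finset.mem_filter, Finset.mem_univ, true_and, MonoidHom.mem_ker] at hu ⊢
      refine ⟨u.isUnit, ?_⟩
      have : ((ZMod.unitsMap hd u : (ZMod d)ˣ) : ZMod d) = ((1 : (ZMod d)ˣ) : ZMod d) := by
        rw [hu]
      rwa [ZMod.unitsMap_def, Units.coe_map, Units.val_one] at this
    · intro u _ u' _ h; exact Units.ext h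
    · intro c hc
      simp only [Finset.mem_filter, Finset.mem_univ, true_and] at hc
      obtain ⟨⟨u, rfl⟩, h1⟩ := hc
      refine ⟨u, ?_, rfl⟩
      simp only [Finset.mem_filter, Finset.mem_univ, true_and, MonoidHom.mem_ker]
      apply Units.ext
      rwa [ZMod.unitsMap_def, Units.coe_map, Units.val_one]
  -- the group-theoretic count
  have hker : Nat.totient d * Nat.card (MonoidHom.ker (ZMod.unitsMap hd))
      = Nat.totient n := by
    have hsurj := ZMod.unitsMap_surjective hd
    have h1 := Subgroup.card_eq_card_quotient_mul_card_subgroup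
      (MonoidHom.ker (ZMod.unitsMap hd))
    have h2 : Nat.card ((ZMod n)ˣ ⧸ MonoidHom.ker (ZMod.unitsMap hd))
        = Nat.card (ZMod d)ˣ :=
      Nat.card_congr (QuotientGroup.quotientKerEquivOfSurjective _ hsurj).toEquiv
    have h3 : Nat.card (ZMod d)ˣ = Nat.totient d := by
      rw [Nat.card_eq_fintype_card, ZMod.card_units_eq_totient]
    have h4 : Nat.card (ZMod n)ˣ = Nat.totient n := by
      rw [Nat.card_eq_fintype_card, ZMod.card_units_eq_totient]
    rw [h2, h3, h4] at h1
    exact h1.symm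
  -- assemble
  have eT : (∑ c ∈ Finset.univ.filter (fun c : ZMod n =>
      IsUnit c ∧ ZMod.castHom hd (ZMod d) c = 1), N c)
      = (Finset.univ.filter (fun c : ZMod n =>
          IsUnit c ∧ ZMod.castHom hd (ZMod d) c = 1)).card * N 1 := by
    rw [Finset.sum_congr rfl (fun c hc => hfib c (Finset.mem_filter.mp hc).2.1),
      Finset.sum_const, smul_eq_mul]
  have eU : (∑ c ∈ Finset.univ.filter (fun c : ZMod n => IsUnit c), N c)
      = (Finset.univ.filter (fun c : ZMod n => IsUnit c)).card * N 1 := by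
    rw [Finset.sum_congr rfl (fun c hc => hfib c (Finset.mem_filter.mp hc).2),
      Finset.sum_const, smul_eq_mul]
  rw [hR, hL, eT, eU, hcard1, hcard2, ← mul_assoc, hker]

/-- Combined Tóth–Sury identity: for all positive integers `k`, `n` and `s ≥ 0`,
`∑ gcd(a₁+⋯+a_k−1, b₁, …, b_s, n) = φ_k(n) · σ_s(n)`, the sum running over all
`1 ≤ aᵢ, bⱼ ≤ n` with `gcd(a₁⋯a_k,n) = 1` and `gcd(a₁+⋯+a_k,n) = 1`. -/
theorem toth_sury_identity (k n : ℕ) (hk : 0 < k) (hn : 0 < n) (s : ℕ) :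
    ∑ a ∈ (Fintype.piFinset fun _ : Fin k => Finset.Icc 1 n).filter
        (fun a => Nat.gcd (∏ i, a i) n = 1 ∧ Nat.gcd (∑ i, a i) n = 1),
      ∑ b ∈ Fintype.piFinset (fun _ : Fin s => Finset.Icc 1 n),
        Nat.gcd (Nat.gcd ((∑ i, a i) - 1) (Finset.univ.gcd b)) n =
      tothPhi k n * ∑ d ∈ n.divisors, d ^ s := by
  classical
  haveI : NeZero n := ⟨hn.ne'⟩
  set P := Fintype.piFinset fun _ : Fin k => Finset.Icc 1 n with hP
  set A := P.filter (fun a => Nat.gcd (∏ i, a i) n = 1 ∧ Nat.gcd (∑ i, a i) n = 1) with hAdef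
  set Bs := Fintype.piFinset (fun _ : Fin s => Finset.Icc 1 n) with hBs
  -- φ_k(n) in terms of the ZMod picture
  have htoth : tothPhi k n = (Finset.univ.filter (fun v : Fin k → ZMod n =>
      IsUnit (∏ i, v i) ∧ IsUnit (∑ i, v i))).card := by
    have h := card_corr k n hn (fun _ => True)
    simpa [tothPhi] using h
  -- transform the summand
  have step1 : ∀ a ∈ A, ∀ b ∈ Bs,
      Nat.gcd (Nat.gcd ((∑ i, a i) - 1) (Finset.univ.gcd b)) n
      = ∑ d ∈ n.divisors,
          if d ∣ (∑ i, a i) - 1 ∧ d ∣ Finset.univ.gcd b then Nat.totient d else 0 := by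
    intro a _ b _
    rw [gcd_eq_sum_totient _ n hn, Finset.sum_filter]
    exact Finset.sum_congr rfl fun d _ => if_congr Nat.dvd_gcd_iff rfl rfl
  calc
    ∑ a ∈ A, ∑ b ∈ Bs, Nat.gcd (Nat.gcd ((∑ i, a i) - 1) (Finset.univ.gcd b)) n
      = ∑ d ∈ n.divisors, ∑ a ∈ A, ∑ b ∈ Bs,
          (if d ∣ (∑ i, a i) - 1 ∧ d ∣ Finset.univ.gcd b then Nat.totient d else 0) := by
        rw [show (∑ a ∈ A, ∑ b ∈ Bs, Nat.gcd (Nat.gcd ((∑ i, a i) - 1) (Finset.univ.gcd b)) n)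
            = ∑ a ∈ A, ∑ d ∈ n.divisors, ∑ b ∈ Bs,
              (if d ∣ (∑ i, a i) - 1 ∧ d ∣ Finset.univ.gcd b then Nat.totient d else 0) from
          Finset.sum_congr rfl fun a ha => by
            rw [Finset.sum_congr rfl (step1 a ha)]; exact Finset.sum_comm]
        exact Finset.sum_comm
    _ = ∑ d ∈ n.divisors, tothPhi k n * (n / d) ^ s := by
        refine Finset.sum_congr rfl fun d hd => ?_
        have hdvd : d ∣ n := (Nat.mem_divisors.mp hd).1
        have hd0 : d ≠ 0 := (Nat.pos_of_mem_divisors hd).ne'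
        haveI : NeZero d := ⟨hd0⟩
        -- count of b-tuples
        have hBcard : (Bs.filter (fun b => d ∣ Finset.univ.gcd b)).card = (n / d) ^ s := by
          have heq : Bs.filter (fun b => d ∣ Finset.univ.gcd b)
              = Fintype.piFinset (fun _ : Fin s => (Finset.Icc 1 n).filter (fun x => d ∣ x)) := by
            ext b
            simp only [hBs, Finset.mem_filter, Fintype.mem_piFinset, Finset.dvd_gcd_iff,
              Finset.mem_univ, forall_true_left, true_implies, Finset.mem_Icc]
            constructor
            · rintro ⟨h1, h2⟩ i; exact ⟨h1 i, h2 i⟩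
            · intro h; exact ⟨fun i => (h i).1, fun i => (h i).2⟩
          rw [heq, Fintype.card_piFinset]
          have hIcc : ((Finset.Icc 1 n).filter (fun x => d ∣ x)).card = n / d := by
            have : Finset.Icc 1 n = Finset.Ioc 0 n := by rw [show (1:ℕ) = 0 + 1 from rfl, Finset.Icc_add_one_left_eq_Ioc]
            rw [this]
            exact Nat.Ioc_filter_dvd_card_eq_div n d
          simp [hIcc]
        -- count of a-tuples with the congruence condition
        have hAcard : Nat.totient d *
            (A.filter (fun a => d ∣ (∑ i, a i) - 1)).card = tothPhi k n := by
          have hfe : A.filter (fun a => d ∣ (∑ i, a i) - 1)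
              = P.filter (fun a => (Nat.gcd (∏ i, a i) n = 1 ∧ Nat.gcd (∑ i, a i) n = 1) ∧
                  ZMod.castHom hdvd (ZMod d) (((∑ i, a i : ℕ)) : ZMod n) = 1) := by
            rw [hAdef, Finset.filter_filter]
            apply Finset.filter_congr
            intro a ha
            have hsum1 : 1 ≤ ∑ i, a i := by
              have hmem := Fintype.mem_piFinset.mp ha
              have : (k : ℕ) = ∑ _i : Fin k, 1 := by simp
              calc 1 ≤ k := hk
                _ = ∑ _i : Fin k, 1 := this
                _ ≤ ∑ i, a i :=
                  Finset.sum_le_sum fun i _ => (Finset.mem_Icc.mp (hmem i)).1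
            have hiff : (d ∣ (∑ i, a i) - 1) ↔
                ZMod.castHom hdvd (ZMod d) (((∑ i, a i : ℕ)) : ZMod n) = 1 := by
              rw [map_natCast (ZMod.castHom hdvd (ZMod d)), show (1 : ZMod d) = ((1 : ℕ) : ZMod d) by simp,
                ZMod.natCast_eq_natCast_iff]
              rw [Nat.ModEq.comm (n := d) (a := (∑ i, a i)) (b := 1)]
              exact (Nat.modEq_iff_dvd' hsum1).symm
            constructor
            · rintro ⟨h1, h2⟩; exact ⟨h1, hiff.mp h2⟩
            · rintro ⟨h1, h2⟩; exact ⟨h1, hiff.mpr h2⟩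
          rw [hfe, hP, card_corr k n hn (fun c => ZMod.castHom hdvd (ZMod d) c = 1),
            zmod_count k n hn hdvd hd0, htoth]
        -- put it together
        have hsplit : ∀ a ∈ A, (∑ b ∈ Bs,
            if d ∣ (∑ i, a i) - 1 ∧ d ∣ Finset.univ.gcd b then Nat.totient d else 0)
            = (if d ∣ (∑ i, a i) - 1 then 1 else 0) * ((n / d) ^ s * Nat.totient d) := by
          intro a _
          by_cases hp : d ∣ (∑ i, a i) - 1
          · simp only [hp, true_and, if_true, one_mul]
            rw [← Finset.sum_filter, Finset.sum_const, smul_eq_mul, hBcard]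
          · simp [hp]
        rw [Finset.sum_congr rfl hsplit, ← Finset.sum_mul]
        have : (∑ a ∈ A, if d ∣ (∑ i, a i) - 1 then 1 else 0)
            = (A.filter (fun a => d ∣ (∑ i, a i) - 1)).card := by
          rw [Finset.card_filter]
        rw [this]
        rw [show (A.filter (fun a => d ∣ (∑ i, a i) - 1)).card * ((n / d) ^ s * Nat.totient d)
          = (Nat.totient d * (A.filter (fun a => d ∣ (∑ i, a i) - 1)).card) * (n / d) ^ s by ring,
          hAcard]
    _ = tothPhi k n * ∑ d ∈ n.divisors, d ^ s := by
        rw [← Finset.mul_sum]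
        congr 1
        exact Nat.sum_div_divisors n (· ^ s)
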